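/- For every natural number m ≥ 1 and every natural number n with n ≥ 2 and 2n ≥ 3·(ᵐ2), it holds that log*(ⁿ2) − log⊛(ⁿ2) ≥ m. In particular, the difference log*(α) − log⊛(α) is unbounded as α ranges over towers of 2s. -/

import Mathlib

noncomputable def lg (x : ℝ) : ℝ := Real.logb 2 (max 1 x)

noncomputable def logStar (α : ℝ) : ℕ := sInf {k : ℕ | lg^[k] α ≤ 1}

noncomputable def logCirc (α : ℝ) : ℕ := sSup {k : ℕ | (k : ℝ) ≤ lg^[k] α}

/-- Tetration of 2: `⁰2 = 1`, `ⁿ⁺¹2 = 2^(ⁿ2)`. -/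
def tet : ℕ → ℕ
  | 0 => 1
  | n + 1 => 2 ^ tet n

lemma tet_pos (k : ℕ) : 1 ≤ tet k := by
  induction k with
  | zero => simp [tet]
  | succ j ih => simp only [tet]; exact Nat.one_le_two_pow

lemma tet_ge (k : ℕ) : k + 1 ≤ tet k := by
  induction k with
  | zero => simp [tet]
  | succ j ih =>
    simp only [tet]
    calc j + 2 ≤ 2 ^ (j + 1) := by
            have := Nat.lt_two_pow_self (n := j + 1); omega
      _ ≤ 2 ^ tet j := Nat.pow_le_pow_right (by norm_num) ih

lemma tet_mono : Monotone tet := by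
  apply monotone_nat_of_le_succ
  intro k
  simp only [tet]
  exact Nat.le_of_lt Nat.lt_two_pow_self

lemma lg_tet_succ (j : ℕ) : lg (tet (j + 1) : ℝ) = (tet j : ℝ) := by
  unfold lg
  have h1 : ((tet (j + 1) : ℕ) : ℝ) = (2 : ℝ) ^ tet j := by
    simp [tet]
  have h2 : (1 : ℝ) ≤ (2 : ℝ) ^ tet j := one_le_pow₀ one_le_two
  rw [h1, max_eq_right h2, Real.logb_pow]
  simp

lemma lg_iter_tet (k n : ℕ) (hk : k ≤ n) : lg^[k] (tet n : ℝ) = (tet (n - k) : ℝ) := by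
  induction k generalizing n with
  | zero => simp
  | succ j ih =>
    obtain ⟨p, rfl⟩ : ∃ p, n = p + 1 := ⟨n - 1, by omega⟩
    rw [Function.iterate_succ_apply, lg_tet_succ, ih p (by omega)]
    have : p - j = p + 1 - (j + 1) := by omega
    rw [this]

lemma four_mul_le (t : ℕ) : 4 * t ≤ 3 * 2 ^ t := by
  induction t with
  | zero => norm_num
  | succ s ih =>
    have h2s : 1 ≤ 2 ^ s := Nat.one_le_two_pow
    rw [pow_succ]
    omega

lemma lg_iter_le_one (j : ℕ) (x : ℝ) (hx : x ≤ 1) : lg^[j] x ≤ 1 := by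
  induction j generalizing x with
  | zero => exact hx
  | succ i ih =>
    rw [Function.iterate_succ_apply]
    apply ih
    unfold lg
    rw [max_eq_left hx, Real.logb_one]
    norm_num

theorem stmt4 (m : ℕ) (hm : 1 ≤ m) (n : ℕ) (hn : 2 ≤ n) (h : 3 * tet m ≤ 2 * n) :
    (m : ℤ) ≤ (logStar (tet n) : ℤ) - (logCirc (tet n) : ℤ) := by
  set t := tet (m - 1) with ht
  have htm : m ≤ t := by have := tet_ge (m - 1); omega
  have htetm : tet m = 2 ^ t := by
    obtain ⟨p, rfl⟩ : ∃ p, m = p + 1 := ⟨m - 1, by omega⟩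
    simp [tet, ht]
  have h4t : 4 * t ≤ 3 * 2 ^ t := four_mul_le t
  have hnmt : m + t ≤ n := by
    have : 2 * (m + t) ≤ 4 * t := by omega
    have h2 : 3 * 2 ^ t ≤ 2 * n := by rw [← htetm]; exact h
    omega
  -- logStar ≥ n
  have hstar : n ≤ logStar (tet n) := by
    apply le_csInf
    · exact ⟨n, by simp [Set.mem_setOf_eq, lg_iter_tet n n le_rfl, tet]⟩
    · intro k hk
      by_contra hkn
      push_neg at hkn
      have hval : lg^[k] (tet n : ℝ) = (tet (n - k) : ℝ) := lg_iter_tet k n (by omega)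
      simp only [Set.mem_setOf_eq, hval] at hk
      have : 1 ≤ n - k := by omega
      have h2 : 2 ≤ tet (n - k) := by
        have := tet_ge (n - k); omega
      have : (2 : ℝ) ≤ (tet (n - k) : ℝ) := by exact_mod_cast h2
      linarith
  -- logCirc ≤ n - m
  have hcirc : logCirc (tet n) ≤ n - m := by
    apply csSup_le
    · exact ⟨0, by simp⟩
    · intro k hk
      simp only [Set.mem_setOf_eq] at hk
      by_contra hkc
      push_neg at hkc
      rcases le_or_gt k n with hkn | hkn
      · have hval : lg^[k] (tet n : ℝ) = (tet (n - k) : ℝ) := lg_iter_tet k n hkn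
        rw [hval] at hk
        have h1 : n - k ≤ m - 1 := by omega
        have h2 : tet (n - k) ≤ t := tet_mono h1
        have h3 : t < k := by omega
        have : (tet (n - k) : ℝ) < (k : ℝ) := by
          exact_mod_cast lt_of_le_of_lt h2 h3
        linarith
      · have : lg^[k] (tet n : ℝ) = lg^[k - n] (lg^[n] (tet n : ℝ)) := by
          rw [← Function.iterate_add_apply]
          congr 1
          omega
        rw [this, lg_iter_tet n n le_rfl] at hk
        simp only [Nat.sub_self] at hk
        have hle : lg^[k - n] ((tet 0 : ℕ) : ℝ) ≤ 1 := by
          apply lg_iter_le_one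
          simp [tet]
        have hk1 : (k : ℝ) ≤ 1 := le_trans hk hle
        have hk2 : (2 : ℕ) ≤ k := by omega
        have : (2 : ℝ) ≤ (k : ℝ) := by exact_mod_cast hk2
        linarith
  have : m ≤ n := by omega
  omega
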